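/- Let R be a commutative Noetherian ring, I an ideal, and M an R-module. Then M ⊗_R R/I = 0 if and only if the I-adic completion of M is zero, i.e. lim_α M/I^α M = 0. -/

import Mathlib

open TensorProduct

/-- Let `R` be a commutative Noetherian ring, `I` an ideal, and `M` an `R`-module.
Then `M ⊗_R R/I = 0` if and only if the `I`-adic completion of `M` is zero. -/
theorem stmt2 {R : Type*} [CommRing R] [IsNoetherianRing R] (I : Ideal R)
    (M : Type*) [AddCommGroup M] [Module R M] :
    Subsingleton (M ⊗[R] (R ⧸ I)) ↔ Subsingleton (AdicCompletion I M) := by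
  have hequiv := (tensorQuotEquivQuotSMul M I).toEquiv
  constructor
  · intro h
    have hq : Subsingleton (M ⧸ (I • ⊤ : Submodule R M)) := hequiv.symm.subsingleton
    have htop : (I • ⊤ : Submodule R M) = ⊤ :=
      (Submodule.Quotient.subsingleton_iff).mp hq
    have hn : ∀ n : ℕ, (I ^ n • ⊤ : Submodule R M) = ⊤ := by
      intro n
      induction n with
      | zero => simp
      | succ n ih =>
        rw [pow_succ, mul_comm, mul_smul, ih, htop]
    have : ∀ n : ℕ, Subsingleton (M ⧸ (I ^ n • ⊤ : Submodule R M)) := fun n ↦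
      (Submodule.Quotient.subsingleton_iff).mpr (hn n)
    constructor
    intro a b
    ext n
    exact Subsingleton.elim _ _
  · intro h
    have hq : Subsingleton (M ⧸ (I ^ 1 • ⊤ : Submodule R M)) :=
      (AdicCompletion.eval_surjective I M 1).subsingleton
    rw [pow_one] at hq
    exact hequiv.symm.symm.subsingleton
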